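/- Uniqueness of the semantics of arbitrary CP-theories: Let C be a CP-theory (bodies may contain negation). If ⟨T₁, I₁, E₁⟩ and ⟨T₂, I₂, E₂⟩ are execution models of C, then π_{T₁} = π_{T₂}, i.e., for every interpretation J, the sum of P(l) over the leaves l of T₁ with I₁(l) = J equals the sum of P(l) over the leaves l of T₂ with I₂(l) = J. -/

import Mathlib

noncomputable section
open scoped Classical

namespace CP

/-- The three truth values. -/
inductive TV where
  | f | u | t
deriving DecidableEq

namespace TV

/-- Rank of a truth value in the truth order `f ≤_t u ≤_t t`. -/
def rank : TV → ℕ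
  | f => 0
  | u => 1
  | t => 2

/-- Minimum in the truth order. -/
def tmin (a b : TV) : TV := if rank a ≤ rank b then a else b

/-- Maximum in the truth order. -/
def tmax (a b : TV) : TV := if rank a ≤ rank b then b else a

/-- Kleene negation. -/
def tneg : TV → TV
  | f => t
  | u => u
  | t => f

/-- The precision order on truth values: `u ≤_p f` and `u ≤_p t` (and reflexivity). -/
def lep (a b : TV) : Prop := a = u ∨ a = b

end TV

/-- Pointwise precision order on three-valued interpretations. -/
def leP {A : Type} (ν ν' : A → TV) : Prop := ∀ a, TV.lep (ν a) (ν' a)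

/-- Propositional formulas over a type `A` of atoms. -/
inductive Form (A : Type) where
  | atom : A → Form A
  | conj : Form A → Form A → Form A
  | disj : Form A → Form A → Form A
  | neg  : Form A → Form A

namespace Form

variable {A : Type}

/-- Two-valued satisfaction of a formula in an interpretation (a set of atoms). -/
def sat (I : Set A) : Form A → Prop
  | .atom a => a ∈ I
  | .conj φ ψ => sat I φ ∧ sat I ψ
  | .disj φ ψ => sat I φ ∨ sat I ψ
  | .neg φ => ¬ sat I φ

/-- Kleene three-valued valuation of a formula. -/
def val (ν : A → TV) : Form A → TV
  | .atom a => ν a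
  | .conj φ ψ => TV.tmin (val ν φ) (val ν ψ)
  | .disj φ ψ => TV.tmax (val ν φ) (val ν ψ)
  | .neg φ => TV.tneg (val ν φ)

/-- A formula is positive if it contains no negation. -/
def Positive : Form A → Prop
  | .atom _ => True
  | .conj φ ψ => Positive φ ∧ Positive ψ
  | .disj φ ψ => Positive φ ∧ Positive ψ
  | .neg _ => False

/-- The set of atoms occurring in a formula. -/
def atoms : Form A → Set A
  | .atom a => {a}
  | .conj φ ψ => atoms φ ∪ atoms ψ
  | .disj φ ψ => atoms φ ∪ atoms ψ
  | .neg φ => atoms φ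

/-- Atoms occurring under a number of negations of parity `b` (`true` = odd). -/
def atomsPar : Bool → Form A → Set A
  | b, .atom a => if b then ∅ else {a}
  | b, .conj φ ψ => atomsPar b φ ∪ atomsPar b ψ
  | b, .disj φ ψ => atomsPar b φ ∪ atomsPar b ψ
  | b, .neg φ => atomsPar (!b) φ

/-- Atoms occurring within the scope of an odd number of negations. -/
def natoms (φ : Form A) : Set A := atomsPar true φ

end Form

/-- A CP-law: a nonempty head list of distinct atoms with probabilities in `(0,1]`
summing to at most `1`, together with a body formula. -/
structure CPLaw (A : Type) where
  head : List (A × ℝ)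
  body : Form A
  head_ne : head ≠ []
  head_nodup : (head.map Prod.fst).Nodup
  head_pos : ∀ p ∈ head, 0 < p.2 ∧ p.2 ≤ 1
  head_sum : (head.map Prod.snd).sum ≤ 1

namespace CPLaw

variable {A : Type}

/-- `head_At(r)`: the set of atoms occurring in the head of `r`. -/
def headAt (r : CPLaw A) : Set A := {a | a ∈ r.head.map Prod.fst}

/-- The sum `Σᵢ αᵢ` of the probabilities in the head of `r`. -/
def psum (r : CPLaw A) : ℝ := (r.head.map Prod.snd).sum

end CPLaw

/-- A probabilistic process: a finite rooted tree (given by a parent function with a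
depth function ensuring well-foundedness), with an interpretation, an edge probability
and a path probability attached to each node, together with (for use in execution
models) a CP-law index `rule` attached to each node and, for each non-root node, the
`choice` in the head of the rule fired at its parent that it corresponds to
(`none` is the extra child carrying the leftover probability `1 - Σᵢ αᵢ`). -/
structure Proc (A R : Type) where
  Node : Type
  [fintypeNode : Fintype Node]
  root : Node
  parent : Node → Node
  depth : Node → ℕ
  interp : Node → Set A
  prob : Node → ℝ
  pathProb : Node → ℝ
  rule : Node → R
  choice : Node → Option ℕ
  depth_root : depth root = 0
  depth_parent : ∀ s, s ≠ root → depth s = depth (parent s) + 1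
  pathProb_root : pathProb root = 1
  pathProb_parent : ∀ s, s ≠ root → pathProb s = pathProb (parent s) * prob s

attribute [instance] Proc.fintypeNode

namespace Proc

variable {A R : Type} (W : Proc A R)

/-- `s'` is a child of `s`. -/
def isChild (s' s : W.Node) : Prop := s' ≠ W.root ∧ W.parent s' = s

/-- `s` is a leaf. -/
def isLeaf (s : W.Node) : Prop := ∀ s', ¬ W.isChild s' s

/-- `strictAnc a b`: `a` is a strict ancestor of `b`. -/
def strictAnc (a b : W.Node) : Prop :=
  Relation.TransGen (fun y x => W.isChild y x) b a

end Proc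

variable {A R : Type}

/-- `R_E(s)`: the CP-laws that have not fired at any strict ancestor of `s`. -/
def RE (W : Proc A R) (s : W.Node) : Set R :=
  {r | ∀ s', W.strictAnc s' s → W.rule s' ≠ r}

/-- The CP-law `E(s)` fires at the non-leaf node `s`: `s` has exactly one child for
each head element `(Aᵢ, αᵢ)` (with interpretation `I(s) ∪ {Aᵢ}` and edge probability
`αᵢ`), plus exactly one extra child with unchanged interpretation and edge probability
`1 - Σᵢ αᵢ` in case `Σᵢ αᵢ < 1`. -/
def FiresAt (C : R → CPLaw A) (W : Proc A R) (s : W.Node) : Prop :=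
  (∀ s', W.isChild s' s →
     (∀ i, W.choice s' = some i →
        ∃ h : i < (C (W.rule s)).head.length,
          W.interp s' = insert ((C (W.rule s)).head.get ⟨i, h⟩).1 (W.interp s) ∧
          W.prob s' = ((C (W.rule s)).head.get ⟨i, h⟩).2) ∧
     (W.choice s' = none →
        (C (W.rule s)).psum < 1 ∧ W.interp s' = W.interp s ∧
          W.prob s' = 1 - (C (W.rule s)).psum)) ∧
  (∀ s₁ s₂, W.isChild s₁ s → W.isChild s₂ s → W.choice s₁ = W.choice s₂ → s₁ = s₂) ∧
  (∀ i, i < (C (W.rule s)).head.length → ∃ s', W.isChild s' s ∧ W.choice s' = some i) ∧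
  ((C (W.rule s)).psum < 1 → ∃ s', W.isChild s' s ∧ W.choice s' = none)

/-- `⟨W, I, E⟩` is a weak execution model of the CP-theory `C`. -/
def IsWEM (C : R → CPLaw A) (W : Proc A R) : Prop :=
  W.interp W.root = (∅ : Set A) ∧
  (∀ s, s ≠ W.root → 0 ≤ W.prob s ∧ W.prob s ≤ 1) ∧
  (∀ s, ¬ W.isLeaf s →
    (∑ s' ∈ Finset.univ.filter (fun s' => W.isChild s' s), W.prob s') = 1) ∧
  (∀ s, ¬ W.isLeaf s →
    W.rule s ∈ RE W s ∧ Form.sat (W.interp s) (C (W.rule s)).body ∧ FiresAt C W s) ∧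
  (∀ l, W.isLeaf l → ∀ r ∈ RE W l, ¬ Form.sat (W.interp l) (C r).body)

/-- `ν 0, …, ν n` is a hypothetical derivation sequence at node `s`. -/
def IsHDS (C : R → CPLaw A) (W : Proc A R) (s : W.Node)
    (ν : ℕ → A → TV) (n : ℕ) : Prop :=
  (∀ a, ν 0 a = if a ∈ W.interp s then TV.t else TV.f) ∧
  ∀ i, i < n → ∃ r ∈ RE W s,
    Form.val (ν i) (C r).body ≠ TV.f ∧
    (∀ p ∈ (C r).headAt, ν i p = TV.f → ν (i+1) p = TV.u) ∧
    (∀ p, ¬ (p ∈ (C r).headAt ∧ ν i p = TV.f) → ν (i+1) p = ν i p)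

/-- The hypothetical derivation sequence `ν 0, …, ν n` at `s` is terminal. -/
def HDSTerminal (C : R → CPLaw A) (W : Proc A R) (s : W.Node)
    (ν : ℕ → A → TV) (n : ℕ) : Prop :=
  ¬ ∃ r ∈ RE W s, Form.val (ν n) (C r).body ≠ TV.f ∧
      ∃ p ∈ (C r).headAt, ν n p = TV.f

/-- `⟨W, I, E⟩` is an execution model of `C`: a weak execution model in which, at every
non-leaf node, the body of the fired CP-law is not unknown in the potential of the
node (the common limit of all terminal hypothetical derivation sequences). -/
def IsExec (C : R → CPLaw A) (W : Proc A R) : Prop :=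
  IsWEM C W ∧
  ∀ s, ¬ W.isLeaf s → ∀ ν n, IsHDS C W s ν n → HDSTerminal C W s ν n →
    Form.val (ν n) (C (W.rule s)).body ≠ TV.u

/-- `π_T`: the probability distribution on interpretations induced by a process. -/
def piT (W : Proc A R) (J : Set A) : ℝ :=
  ∑ l ∈ Finset.univ.filter (fun l => W.isLeaf l ∧ W.interp l = J), W.pathProb l

/-! ### Auxiliary development for the uniqueness theorem -/

section Aux

variable {A R : Type}

lemma TV.lep_refl (a : TV) : TV.lep a a := Or.inr rfl

lemma TV.lep_tmin : ∀ a b a' b' : TV, TV.lep a a' → TV.lep b b' →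
    TV.lep (TV.tmin a b) (TV.tmin a' b') := by
  rintro ⟨⟩ ⟨⟩ ⟨⟩ ⟨⟩ ha hb <;> simp_all [TV.lep, TV.tmin, TV.rank]

lemma TV.lep_tmax : ∀ a b a' b' : TV, TV.lep a a' → TV.lep b b' →
    TV.lep (TV.tmax a b) (TV.tmax a' b') := by
  rintro ⟨⟩ ⟨⟩ ⟨⟩ ⟨⟩ ha hb <;> simp_all [TV.lep, TV.tmax, TV.rank]

lemma TV.lep_tneg : ∀ a a' : TV, TV.lep a a' → TV.lep (TV.tneg a) (TV.tneg a') := by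
  rintro ⟨⟩ ⟨⟩ h <;> simp_all [TV.lep, TV.tneg]

lemma val_mono {ν ν' : A → TV} (h : leP ν ν') :
    ∀ φ : Form A, TV.lep (Form.val ν φ) (Form.val ν' φ) := by
  intro φ
  induction φ with
  | atom a => exact h a
  | conj φ ψ ihφ ihψ => exact TV.lep_tmin _ _ _ _ ihφ ihψ
  | disj φ ψ ihφ ihψ => exact TV.lep_tmax _ _ _ _ ihφ ihψ
  | neg φ ihφ => exact TV.lep_tneg _ _ ihφ

/-- Three-valued interpretation: true on `I`, unknown on `U` (minus `I`), false elsewhere. -/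
def nuOf (I U : Set A) : A → TV := fun a =>
  if a ∈ I then TV.t else if a ∈ U then TV.u else TV.f

lemma nuOf_t {I U : Set A} {a : A} (h : a ∈ I) : nuOf I U a = TV.t := by
  simp [nuOf, h]

lemma nuOf_f {I U : Set A} {a : A} (h : a ∉ I ∪ U) : nuOf I U a = TV.f := by
  simp only [Set.mem_union, not_or] at h
  simp [nuOf, h.1, h.2]

lemma nuOf_eq_f_iff {I U : Set A} {a : A} : nuOf I U a = TV.f ↔ a ∉ I ∪ U := by
  unfold nuOf
  split_ifs with h1 h2 <;> simp_all

lemma leP_nuOf {I I' U U' : Set A} (h1 : I ⊆ I') (h2 : I' ∪ U' ⊆ I ∪ U) :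
    leP (nuOf I U) (nuOf I' U') := by
  intro a
  by_cases hI : a ∈ I
  · rw [nuOf_t hI, nuOf_t (h1 hI)]; exact Or.inr rfl
  · by_cases hU : a ∈ U
    · simp [nuOf, hI, hU, TV.lep]
    · have : a ∉ I' ∪ U' := fun hc => (by simpa [hI, hU] using h2 hc)
      rw [nuOf_f (by simp [hI, hU]), nuOf_f this]
      exact Or.inr rfl

lemma val_nuOf_empty {I : Set A} (φ : Form A) :
    Form.val (nuOf I ∅) φ = if Form.sat I φ then TV.t else TV.f := by
  induction φ with
  | atom a =>
    by_cases h : a ∈ I <;> simp [Form.val, Form.sat, nuOf, h]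
  | conj φ ψ ihφ ihψ =>
    rw [Form.val, ihφ, ihψ]
    by_cases h1 : Form.sat I φ <;> by_cases h2 : Form.sat I ψ <;>
      simp [Form.sat, h1, h2, TV.tmin, TV.rank]
  | disj φ ψ ihφ ihψ =>
    rw [Form.val, ihφ, ihψ]
    by_cases h1 : Form.sat I φ <;> by_cases h2 : Form.sat I ψ <;>
      simp [Form.sat, h1, h2, TV.tmax, TV.rank]
  | neg φ ihφ =>
    rw [Form.val, ihφ]
    by_cases h : Form.sat I φ <;> simp [Form.sat, h, TV.tneg]

variable (C : R → CPLaw A)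

/-- `U` is reachable as the unknown-set of a hypothetical derivation sequence
for state `(I, S)`. -/
inductive Reach (I : Set A) (S : Set R) : Set A → Prop
  | nil : Reach I S ∅
  | step {U : Set A} {r : R} : Reach I S U → r ∈ S →
      Form.val (nuOf I U) (C r).body ≠ TV.f →
      Reach I S (U ∪ ((C r).headAt \ (I ∪ U)))

/-- `U` is the unknown-set of a terminal hypothetical derivation sequence. -/
def ClosedU (I : Set A) (S : Set R) (U : Set A) : Prop :=
  ∀ r ∈ S, Form.val (nuOf I U) (C r).body ≠ TV.f → (C r).headAt ⊆ I ∪ U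

/-- A rule is enabled at `(I, S)` if its body is true under every
terminal hypothetical derivation sequence for that state. -/
def Enabled (I : Set A) (S : Set R) (r : R) : Prop :=
  r ∈ S ∧ ∀ U, Reach C I S U → ClosedU C I S U →
    Form.val (nuOf I U) (C r).body = TV.t

lemma lep_ne_f {x y : TV} (h : TV.lep x y) (hy : y ≠ TV.f) : x ≠ TV.f := by
  rcases h with h | h <;> simp_all

lemma lep_of_t {y : TV} (h : TV.lep TV.t y) : y = TV.t := by
  rcases h with h | h <;> simp_all

lemma reach_subset_closed {I : Set A} {S : Set R} {U V : Set A}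
    (hU : Reach C I S U) (hV : ClosedU C I S V) : U ⊆ V := by
  induction hU with
  | nil => exact Set.empty_subset _
  | @step U r hU hr hval ih =>
    have hmono : leP (nuOf I V) (nuOf I U) :=
      leP_nuOf (subset_refl I) (Set.union_subset_union_right I ih)
    have hvalV : Form.val (nuOf I V) (C r).body ≠ TV.f :=
      lep_ne_f (val_mono hmono _) hval
    have hhead : (C r).headAt ⊆ I ∪ V := hV r hr hvalV
    intro a ha
    rcases ha with ha | ha
    · exact ih ha
    · rcases hhead ha.1 with h | h
      · exact absurd (Or.inl h) ha.2
      · exact h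

/-- Every reachable state extends to a reachable closed (terminal) state. -/
lemma exists_closed [Fintype A] (I : Set A) (S : Set R) :
    ∃ V, Reach C I S V ∧ ClosedU C I S V := by
  suffices h : ∀ n (U : Set A), Reach C I S U → ((I ∪ U)ᶜ).ncard ≤ n →
      ∃ V, Reach C I S V ∧ ClosedU C I S V by
    exact h ((I ∪ (∅ : Set A))ᶜ).ncard ∅ (Reach.nil) le_rfl
  intro n
  induction n with
  | zero =>
    intro U hU hcard
    by_cases hcl : ClosedU C I S U
    · exact ⟨U, hU, hcl⟩
    · exfalso
      simp only [ClosedU, not_forall] at hcl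
      obtain ⟨r, hr, hval, hsub⟩ := hcl
      obtain ⟨a, haH, haU⟩ := Set.not_subset.mp hsub
      have : ((I ∪ U)ᶜ).ncard = 0 := Nat.le_zero.mp hcard
      have hempty : ((I ∪ U)ᶜ) = ∅ :=
        (Set.ncard_eq_zero (Set.toFinite _)).mp this
      exact absurd (hempty ▸ haU : a ∈ (∅ : Set A)) (Set.notMem_empty a)
  | succ n ih =>
    intro U hU hcard
    by_cases hcl : ClosedU C I S U
    · exact ⟨U, hU, hcl⟩
    · simp only [ClosedU, not_forall] at hcl
      obtain ⟨r, hr, hval, hsub⟩ := hcl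
      obtain ⟨a, haH, haU⟩ := Set.not_subset.mp hsub
      have hU' : Reach C I S (U ∪ ((C r).headAt \ (I ∪ U))) :=
        Reach.step hU hr hval
      apply ih _ hU'
      have hss : (I ∪ (U ∪ ((C r).headAt \ (I ∪ U))))ᶜ ⊂ (I ∪ U)ᶜ := by
        constructor
        · apply Set.compl_subset_compl.mpr
          intro x hx
          rcases hx with hx | hx
          · exact Or.inl hx
          · exact Or.inr (Or.inl hx)
        · intro hsub2
          have : a ∈ (I ∪ (U ∪ ((C r).headAt \ (I ∪ U))))ᶜ := by
            apply hsub2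
            exact haU
          exact this (Or.inr (Or.inr ⟨haH, haU⟩))
      have := Set.ncard_lt_ncard hss (Set.toFinite _)
      omega

lemma enabled_sat [Fintype A] {I : Set A} {S : Set R} {r : R}
    (h : Enabled C I S r) : Form.sat I (C r).body := by
  obtain ⟨V, hV, hVc⟩ := exists_closed C I S
  have ht := h.2 V hV hVc
  have hmono : leP (nuOf I V) (nuOf I ∅) :=
    leP_nuOf (subset_refl I) (by simp)
  have := val_mono hmono (C r).body
  rw [ht] at this
  have := lep_of_t this
  rw [val_nuOf_empty] at this
  by_contra hs
  simp [hs] at this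

lemma enabled_head_sub {I : Set A} {S : Set R} {r : R} {U : Set A}
    (h : Enabled C I S r) (hU : Reach C I S U) (hUc : ClosedU C I S U) :
    (C r).headAt ⊆ I ∪ U := by
  apply hUc r h.1
  rw [h.2 U hU hUc]
  simp

/-- Enabledness persists when another enabled rule fires. -/
lemma enabled_persist [Fintype A] {I : Set A} {S : Set R} {r r' : R}
    (hr : Enabled C I S r) (hr' : Enabled C I S r') (hne : r' ≠ r)
    {Δ : Set A} (hΔ : Δ ⊆ (C r).headAt) :
    Enabled C (I ∪ Δ) (S \ {r}) r' := by
  refine ⟨⟨hr'.1, hne⟩, ?_⟩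
  intro U' hU' hU'c
  obtain ⟨V, hV, hVc⟩ := exists_closed C I S
  have hΔV : Δ ⊆ I ∪ V := fun a ha => enabled_head_sub C hr hV hVc (hΔ ha)
  -- the set `V \ Δ` is closed for the new state
  have hunion : (I ∪ Δ) ∪ (V \ Δ) = I ∪ V := by
    ext a
    constructor
    · rintro ((h | h) | ⟨h, _⟩)
      · exact Or.inl h
      · exact hΔV h
      · exact Or.inr h
    · rintro (h | h)
      · exact Or.inl (Or.inl h)
      · by_cases hd : a ∈ Δ
        · exact Or.inl (Or.inr hd)
        · exact Or.inr ⟨h, hd⟩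
  have hmono1 : leP (nuOf I V) (nuOf (I ∪ Δ) (V \ Δ)) := by
    apply leP_nuOf Set.subset_union_left
    rw [hunion]
  have hcl : ClosedU C (I ∪ Δ) (S \ {r}) (V \ Δ) := by
    intro r'' hr'' hval
    have hvalV : Form.val (nuOf I V) (C r'').body ≠ TV.f :=
      lep_ne_f (val_mono hmono1 _) hval
    have := hVc r'' hr''.1 hvalV
    rw [hunion]
    exact this
  have hsub : U' ⊆ V \ Δ := reach_subset_closed C hU' hcl
  have hmono2 : leP (nuOf I V) (nuOf (I ∪ Δ) U') := by
    apply leP_nuOf Set.subset_union_left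
    calc (I ∪ Δ) ∪ U' ⊆ (I ∪ Δ) ∪ (V \ Δ) := Set.union_subset_union_right _ hsub
      _ = I ∪ V := hunion
  have ht := hr'.2 V hV hVc
  have := val_mono hmono2 (C r').body
  rw [ht] at this
  exact lep_of_t this

section Bridge

variable {W : Proc A R}

/-- Any reachable unknown-set is realised by an actual HDS. -/
lemma reach_to_hds {s : W.Node} {U : Set A}
    (hU : Reach C (W.interp s) (RE W s) U) :
    ∃ ν n, IsHDS C W s ν n ∧ ν n = nuOf (W.interp s) U := by
  induction hU with
  | nil =>
    refine ⟨fun _ => nuOf (W.interp s) ∅, 0, ⟨?_, ?_⟩, rfl⟩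
    · intro a
      by_cases h : a ∈ W.interp s <;> simp [nuOf, h]
    · intro i hi; omega
  | @step U r hU hr hval ih =>
    obtain ⟨ν, n, ⟨hν0, hνstep⟩, hνn⟩ := ih
    set U' := U ∪ ((C r).headAt \ (W.interp s ∪ U)) with hU'def
    refine ⟨fun i => if i ≤ n then ν i else nuOf (W.interp s) U', n + 1,
      ⟨?_, ?_⟩, by simp⟩
    · simpa using hν0
    · intro i hi
      by_cases hin : i < n
      · obtain ⟨r', hr', h1, h2, h3⟩ := hνstep i hin
        refine ⟨r', hr', ?_, ?_, ?_⟩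
        · simpa [Nat.le_of_lt hin] using h1
        · intro p hp hpf
          have := h2 p hp (by simpa [Nat.le_of_lt hin] using hpf)
          simpa [Nat.le_of_lt hin, Nat.succ_le_of_lt hin] using this
        · intro p hp
          have := h3 p (by simpa [Nat.le_of_lt hin] using hp)
          simpa [Nat.le_of_lt hin, Nat.succ_le_of_lt hin] using this
      · have hieq : i = n := by omega
        subst hieq
        have h1 : ¬ (i + 1 ≤ i) := by omega
        refine ⟨r, hr, ?_, ?_, ?_⟩
        · simpa [hνn] using hval
        · intro p hp hpf
          simp only [le_refl, if_true, ite_true] at hpf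
          rw [hνn] at hpf
          have hpnot : p ∉ W.interp s ∪ U := nuOf_eq_f_iff.mp hpf
          have hpU' : p ∈ U' := Or.inr ⟨hp, hpnot⟩
          have hpI : p ∉ W.interp s := fun hc => hpnot (Or.inl hc)
          simp only [h1, if_false, ite_false]
          simp [nuOf, hpI, hpU']
        · intro p hp
          simp only [le_refl, if_true, ite_true, h1, if_false, ite_false] at hp ⊢
          rw [hνn] at hp ⊢
          by_cases hpI : p ∈ W.interp s
          · simp [nuOf, hpI]
          · by_cases hpU : p ∈ U
            · have hpU'2 : p ∈ U' := Or.inl hpU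
              simp [nuOf, hpI, hpU, hpU'2]
            · have hpU' : p ∉ U' := by
                intro hc
                rcases hc with hc | hc
                · exact hpU hc
                · exact hp ⟨hc.1, nuOf_f (by simp [hpI, hpU])⟩
              simp [nuOf, hpI, hpU, hpU']

/-- In an execution model, the rule fired at a non-leaf node is enabled. -/
lemma exec_enabled [Fintype A] (hW : IsExec C W) {s : W.Node} (hs : ¬ W.isLeaf s) :
    Enabled C (W.interp s) (RE W s) (W.rule s) := by
  obtain ⟨⟨_, _, _, hwem4, _⟩, hexec⟩ := hW
  obtain ⟨hRE, hsat, _⟩ := hwem4 s hs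
  refine ⟨hRE, ?_⟩
  intro U hU hUc
  obtain ⟨ν, n, hhds, hνn⟩ := reach_to_hds C hU
  have hterm : HDSTerminal C W s ν n := by
    rintro ⟨r, hr, hval, p, hp, hpf⟩
    rw [hνn] at hval hpf
    exact nuOf_eq_f_iff.mp hpf (hUc r hr hval hp)
  have hne := hexec s hs ν n hhds hterm
  rw [hνn] at hne
  have hmono : leP (nuOf (W.interp s) U) (nuOf (W.interp s) ∅) :=
    leP_nuOf (subset_refl _) (by simp)
  have := val_mono hmono (C (W.rule s)).body
  rw [val_nuOf_empty, if_pos hsat] at this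
  rcases this with h | h
  · exact absurd h hne
  · exact h

/-- At a leaf of a weak execution model, no rule is enabled. -/
lemma leaf_no_enabled [Fintype A] (hW : IsWEM C W) {l : W.Node} (hl : W.isLeaf l)
    (r : R) : ¬ Enabled C (W.interp l) (RE W l) r := by
  intro h
  exact hW.2.2.2.2 l hl r h.1 (enabled_sat C h)

end Bridge

lemma swap_sum_identity {ι κ : Type} (s : Finset ι) (t : Finset κ)
    (α : ι → ℝ) (β : κ → ℝ) (c d : ℝ) (F F' : ι → κ → ℝ)
    (hF : ∀ i j, F i j = F' i j) (F₁ : ι → ℝ) (F₂ : κ → ℝ) (F₃ : ℝ) :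
    (∑ i ∈ s, α i * (∑ j ∈ t, β j * F i j + d * F₁ i)) + c * ((∑ j ∈ t, β j * F₂ j) + d * F₃)
    = (∑ j ∈ t, β j * ((∑ i ∈ s, α i * F' i j) + c * F₂ j)) +
        d * ((∑ i ∈ s, α i * F₁ i) + c * F₃) := by
  simp only [hF, mul_add, Finset.mul_sum, Finset.sum_add_distrib]
  rw [Finset.sum_comm]
  have h2 : ∑ x ∈ t, ∑ y ∈ s, α y * (β x * F' y x) = ∑ x ∈ t, ∑ y ∈ s, β x * (α y * F' y x) :=
    Finset.sum_congr rfl fun j _ => Finset.sum_congr rfl fun i _ => by ring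
  have h3 : ∑ y ∈ s, α y * (d * F₁ y) = d * ∑ y ∈ s, α y * F₁ y := by
    rw [Finset.mul_sum]; exact Finset.sum_congr rfl fun i _ => by ring
  have h4 : ∑ x ∈ t, c * (β x * F₂ x) = ∑ x ∈ t, β x * (c * F₂ x) :=
    Finset.sum_congr rfl fun j _ => by ring
  rw [h2, h3, h4]
  have h5 : ∑ i ∈ s, d * (α i * F₁ i) = d * ∑ i ∈ s, α i * F₁ i :=
    (Finset.mul_sum _ _ _).symm
  rw [h5]
  ring

/-- The canonical distribution generated from state `(I, S)`. -/
noncomputable def Gfun (C : R → CPLaw A) (S : Finset R) (I J : Set A) : ℝ :=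
  if h : ∃ r ∈ S, Enabled C I ↑S r then
    (∑ i ∈ (Finset.range (C h.choose).head.length).attach,
        ((C h.choose).head.get ⟨i.1, Finset.mem_range.mp i.2⟩).2 *
          Gfun C (S.erase h.choose)
            (insert ((C h.choose).head.get ⟨i.1, Finset.mem_range.mp i.2⟩).1 I) J)
      + (1 - (C h.choose).psum) * Gfun C (S.erase h.choose) I J
  else if I = J then 1 else 0
termination_by S.card
decreasing_by
  all_goals exact Finset.card_erase_lt_of_mem h.choose_spec.1

/-- One-step decomposition of the canonical distribution by a given rule. -/
noncomputable def Dsum (C : R → CPLaw A) (r : R) (S' : Finset R) (I J : Set A) : ℝ :=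
  (∑ i ∈ (Finset.range (C r).head.length).attach,
      ((C r).head.get ⟨i.1, Finset.mem_range.mp i.2⟩).2 *
        Gfun C S' (insert ((C r).head.get ⟨i.1, Finset.mem_range.mp i.2⟩).1 I) J)
    + (1 - (C r).psum) * Gfun C S' I J

lemma Gfun_eq (S : Finset R) (I J : Set A) :
    Gfun C S I J =
      if h : ∃ r ∈ S, Enabled C I ↑S r then Dsum C h.choose (S.erase h.choose) I J
      else if I = J then 1 else 0 := by
  rw [Gfun]
  rfl

lemma Gfun_of_not_enabled {S : Finset R} {I : Set A}
    (h : ¬ ∃ r ∈ S, Enabled C I ↑S r) (J : Set A) :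
    Gfun C S I J = if I = J then 1 else 0 := by
  rw [Gfun_eq, dif_neg h]

lemma erase_comm' {α : Type} [DecidableEq α] (s : Finset α) (a b : α) :
    (s.erase a).erase b = (s.erase b).erase a := by
  ext x
  simp only [Finset.mem_erase]
  tauto

lemma head_fst_mem_headAt (r : R) {i : ℕ} (h : i < (C r).head.length) :
    ((C r).head.get ⟨i, h⟩).1 ∈ (C r).headAt := by
  simp only [CPLaw.headAt, Set.mem_setOf_eq]
  exact List.mem_map_of_mem (f := Prod.fst) (List.get_mem _ _)

lemma Dsum_congr (r : R) (S' : Finset R) (I J : Set A) (K : Set A → ℝ)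
    (hins : ∀ a ∈ (C r).headAt, Gfun C S' (insert a I) J = K (insert a I))
    (hbase : Gfun C S' I J = K I) :
    Dsum C r S' I J =
      (∑ i ∈ (Finset.range (C r).head.length).attach,
        ((C r).head.get ⟨i.1, Finset.mem_range.mp i.2⟩).2 *
          K (insert ((C r).head.get ⟨i.1, Finset.mem_range.mp i.2⟩).1 I))
      + (1 - (C r).psum) * K I := by
  rw [Dsum, hbase]
  congr 1
  refine Finset.sum_congr rfl fun i _ => ?_
  rw [hins _ (head_fst_mem_headAt C r _)]

/-- The main exchange identity: the canonical distribution decomposes along any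
enabled rule. -/
lemma exchange [Fintype A] (J : Set A) :
    ∀ S : Finset R, ∀ I : Set A, ∀ r : R, r ∈ S → Enabled C I ↑S r →
      Gfun C S I J = Dsum C r (S.erase r) I J := by
  intro S
  induction S using Finset.strongInduction with
  | _ S ih =>
    intro I r hrS hr
    have hex : ∃ r' ∈ S, Enabled C I ↑S r' := ⟨r, hrS, hr⟩
    rw [Gfun_eq, dif_pos hex]
    set r₀ := hex.choose with hr₀def
    obtain ⟨hr₀S, hr₀⟩ := hex.choose_spec
    by_cases heq : r₀ = r
    · rw [heq]
    · have hrne : r ≠ r₀ := fun h => heq h.symm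
      have hr's : r ∈ S.erase r₀ := Finset.mem_erase.mpr ⟨hrne, hrS⟩
      have hr₀s : r₀ ∈ S.erase r := Finset.mem_erase.mpr ⟨heq, hr₀S⟩
      have hcoe₀ : ((S.erase r₀ : Finset R) : Set R) = ↑S \ {r₀} := Finset.coe_erase _ _
      have hcoer : ((S.erase r : Finset R) : Set R) = ↑S \ {r} := Finset.coe_erase _ _
      have ih₀ : ∀ I', Enabled C I' ↑(S.erase r₀) r →
          Gfun C (S.erase r₀) I' J = Dsum C r ((S.erase r₀).erase r) I' J :=
        fun I' hE => ih _ (Finset.erase_ssubset hr₀S) I' r hr's hE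
      have ihr : ∀ I', Enabled C I' ↑(S.erase r) r₀ →
          Gfun C (S.erase r) I' J = Dsum C r₀ ((S.erase r).erase r₀) I' J :=
        fun I' hE => ih _ (Finset.erase_ssubset hrS) I' r₀ hr₀s hE
      have hEr : ∀ Δ : Set A, Δ ⊆ (C r₀).headAt → Enabled C (I ∪ Δ) ↑(S.erase r₀) r := by
        intro Δ hΔ; rw [hcoe₀]; exact enabled_persist C hr₀ hr hrne hΔ
      have hEr₀ : ∀ Δ : Set A, Δ ⊆ (C r).headAt → Enabled C (I ∪ Δ) ↑(S.erase r) r₀ := by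
        intro Δ hΔ; rw [hcoer]; exact enabled_persist C hr hr₀ heq hΔ
      have hL : Dsum C r₀ (S.erase r₀) I J =
          (∑ i ∈ (Finset.range (C r₀).head.length).attach,
            ((C r₀).head.get ⟨i.1, Finset.mem_range.mp i.2⟩).2 *
              Dsum C r ((S.erase r₀).erase r)
                (insert ((C r₀).head.get ⟨i.1, Finset.mem_range.mp i.2⟩).1 I) J)
          + (1 - (C r₀).psum) * Dsum C r ((S.erase r₀).erase r) I J := by
        refine Dsum_congr C r₀ (S.erase r₀) I J
          (fun I' => Dsum C r ((S.erase r₀).erase r) I' J) ?_ ?_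
        · intro a ha
          apply ih₀
          have := hEr {a} (Set.singleton_subset_iff.mpr ha)
          rwa [Set.union_singleton] at this
        · apply ih₀
          have := hEr ∅ (Set.empty_subset _)
          rwa [Set.union_empty] at this
      have hR : Dsum C r (S.erase r) I J =
          (∑ j ∈ (Finset.range (C r).head.length).attach,
            ((C r).head.get ⟨j.1, Finset.mem_range.mp j.2⟩).2 *
              Dsum C r₀ ((S.erase r).erase r₀)
                (insert ((C r).head.get ⟨j.1, Finset.mem_range.mp j.2⟩).1 I) J)
          + (1 - (C r).psum) * Dsum C r₀ ((S.erase r).erase r₀) I J := by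
        refine Dsum_congr C r (S.erase r) I J
          (fun I' => Dsum C r₀ ((S.erase r).erase r₀) I' J) ?_ ?_
        · intro a ha
          apply ihr
          have := hEr₀ {a} (Set.singleton_subset_iff.mpr ha)
          rwa [Set.union_singleton] at this
        · apply ihr
          have := hEr₀ ∅ (Set.empty_subset _)
          rwa [Set.union_empty] at this
      rw [hL, hR, erase_comm' S r₀ r]
      simp only [Dsum]
      exact swap_sum_identity _ _ _ _ _ _ _ _
        (fun i j => by rw [Set.insert_comm]) _ _ _

section Tree

variable {W : Proc A R}

lemma not_strictAnc_root (s' : W.Node) : ¬ W.strictAnc s' W.root := by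
  intro h
  have h' : Relation.TransGen (fun y x => W.isChild y x) W.root s' := h
  obtain ⟨b, h1, -⟩ := Relation.TransGen.head'_iff.mp h'
  exact h1.1 rfl

lemma RE_root : RE W W.root = Set.univ := by
  ext r
  simp only [RE, Set.mem_setOf_eq, Set.mem_univ, iff_true]
  intro s' h
  exact absurd h (not_strictAnc_root s')

/-- `l` lies in the subtree rooted at `s`. -/
def belowN (W : Proc A R) (s l : W.Node) : Prop := l = s ∨ W.strictAnc s l

lemma below_root (l : W.Node) : belowN W W.root l := by
  have key : ∀ n (l : W.Node), W.depth l ≤ n → belowN W W.root l := by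
    intro n
    induction n with
    | zero =>
      intro l hl
      by_cases h : l = W.root
      · exact Or.inl h
      · exfalso; have := W.depth_parent l h; omega
    | succ n ihn =>
      intro l hl
      by_cases h : l = W.root
      · exact Or.inl h
      · have hd := W.depth_parent l h
        have hc : W.isChild l (W.parent l) := ⟨h, rfl⟩
        rcases ihn (W.parent l) (by omega) with hp | hp
        · exact Or.inr (Relation.TransGen.single (hp ▸ hc))
        · exact Or.inr (Relation.TransGen.head hc hp)
  exact key (W.depth l) l le_rfl

lemma strictAnc_child {c s x : W.Node} (hc : W.isChild c s) :
    W.strictAnc x c ↔ x = s ∨ W.strictAnc x s := by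
  constructor
  · intro h
    have h' : Relation.TransGen (fun y x => W.isChild y x) c x := h
    obtain ⟨b, h1, h2⟩ := Relation.TransGen.head'_iff.mp h'
    have hb : b = s := h1.2.symm.trans hc.2
    subst hb
    rcases Relation.ReflTransGen.cases_head h2 with rfl | ⟨e, hse, hex⟩
    · exact Or.inl rfl
    · exact Or.inr (Relation.TransGen.head' hse hex)
  · rintro (rfl | h)
    · exact Relation.TransGen.single hc
    · exact Relation.TransGen.head hc h

lemma RE_child {c s : W.Node} (hc : W.isChild c s) :
    RE W c = RE W s \ {W.rule s} := by
  ext r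
  simp only [RE, Set.mem_setOf_eq, Set.mem_diff, Set.mem_singleton_iff]
  constructor
  · intro h
    refine ⟨fun s' hs' => h s' ((strictAnc_child hc).mpr (Or.inr hs')), ?_⟩
    intro hr
    exact h s ((strictAnc_child hc).mpr (Or.inl rfl)) hr.symm
  · rintro ⟨h1, h2⟩ s' hs'
    rcases (strictAnc_child hc).mp hs' with rfl | hs'
    · exact fun hr => h2 hr.symm
    · exact h1 s' hs'

lemma leaf_not_strictAnc {s : W.Node} (hl : W.isLeaf s) (l : W.Node) :
    ¬ W.strictAnc s l := by
  intro h
  induction h with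
  | single h1 => exact hl _ h1
  | tail _ h2 _ => exact hl _ h2

lemma anc_iterate {a b : W.Node} (h : W.strictAnc a b) :
    ∃ k, 0 < k ∧ W.parent^[k] b = a ∧ W.depth b = W.depth a + k := by
  induction h with
  | single h1 =>
    refine ⟨1, one_pos, by simp [h1.2], ?_⟩
    rw [W.depth_parent _ h1.1, h1.2]
  | tail h1 h2 ih =>
    obtain ⟨k, hk, hit, hd⟩ := ih
    refine ⟨k + 1, by omega, ?_, ?_⟩
    · rw [Function.iterate_succ_apply', hit, h2.2]
    · rw [hd, W.depth_parent _ h2.1, h2.2]; omega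

lemma depth_child {c s : W.Node} (hc : W.isChild c s) : W.depth c = W.depth s + 1 := by
  rw [← hc.2]
  exact W.depth_parent _ hc.1

lemma child_toward_unique {s l c₁ c₂ : W.Node} (h1 : W.isChild c₁ s) (h2 : W.isChild c₂ s)
    (hb1 : belowN W c₁ l) (hb2 : belowN W c₂ l) : c₁ = c₂ := by
  have hd1 : W.depth c₁ = W.depth s + 1 := depth_child h1
  have hd2 : W.depth c₂ = W.depth s + 1 := depth_child h2
  rcases hb1 with rfl | hb1
  · rcases hb2 with rfl | hb2
    · rfl
    · obtain ⟨k, hk, _, hdep⟩ := anc_iterate hb2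
      omega
  · rcases hb2 with rfl | hb2
    · obtain ⟨k, hk, _, hdep⟩ := anc_iterate hb1
      omega
    · obtain ⟨k1, hk1, hit1, hdep1⟩ := anc_iterate hb1
      obtain ⟨k2, hk2, hit2, hdep2⟩ := anc_iterate hb2
      have : k1 = k2 := by omega
      rw [← hit1, ← hit2, this]

lemma exists_child_toward {s l : W.Node} (h : W.strictAnc s l) :
    ∃ c, W.isChild c s ∧ belowN W c l := by
  induction h with
  | single h1 => exact ⟨l, h1, Or.inl rfl⟩
  | tail h1 h2 _ => exact ⟨_, h2, Or.inr h1⟩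

/-- Probability of the subtree rooted at `s` ending with interpretation `J`. -/
noncomputable def subPi (W : Proc A R) (s : W.Node) (J : Set A) : ℝ :=
  ∑ l ∈ Finset.univ.filter (fun l => W.isLeaf l ∧ W.interp l = J ∧ belowN W s l),
    W.pathProb l

lemma subPi_leaf [Fintype A] [Fintype R] {W : Proc A R} (hW : IsExec C W) {s : W.Node}
    (hleaf : W.isLeaf s) (J : Set A) :
    subPi W s J = W.pathProb s * Gfun C (RE W s).toFinset (W.interp s) J := by
  have hG : Gfun C (RE W s).toFinset (W.interp s) J = if W.interp s = J then 1 else 0 := by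
    apply Gfun_of_not_enabled
    rintro ⟨r, hrS, hr⟩
    rw [Set.coe_toFinset] at hr
    exact leaf_no_enabled C hW.1 hleaf r hr
  rw [hG, subPi]
  by_cases hIJ : W.interp s = J
  · rw [if_pos hIJ]
    have hset : Finset.univ.filter (fun l => W.isLeaf l ∧ W.interp l = J ∧ belowN W s l)
        = {s} := by
      ext l
      simp only [Finset.mem_filter, Finset.mem_univ, true_and, Finset.mem_singleton]
      constructor
      · rintro ⟨hl, hlJ, (rfl | hanc)⟩
        · rfl
        · exact absurd hanc (leaf_not_strictAnc hleaf l)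
      · rintro rfl
        exact ⟨hleaf, hIJ, Or.inl rfl⟩
    rw [hset, Finset.sum_singleton, mul_one]
  · rw [if_neg hIJ]
    have hset : Finset.univ.filter (fun l => W.isLeaf l ∧ W.interp l = J ∧ belowN W s l)
        = ∅ := by
      ext l
      simp only [Finset.mem_filter, Finset.mem_univ, true_and, Finset.notMem_empty,
        iff_false, not_and]
      rintro hl hlJ (rfl | hanc)
      · exact hIJ hlJ
      · exact absurd hanc (leaf_not_strictAnc hleaf l)
    rw [hset, Finset.sum_empty, mul_zero]

lemma subPi_eq [Fintype A] [Fintype R] {W : Proc A R} (hW : IsExec C W) (J : Set A) :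
    ∀ s : W.Node, subPi W s J = W.pathProb s * Gfun C (RE W s).toFinset (W.interp s) J := by
  suffices key : ∀ n (s : W.Node), ((RE W s).toFinset).card ≤ n →
      subPi W s J = W.pathProb s * Gfun C (RE W s).toFinset (W.interp s) J by
    intro s; exact key _ s le_rfl
  intro n
  induction n with
  | zero =>
    intro s hs
    by_cases hleaf : W.isLeaf s
    · exact subPi_leaf C hW hleaf J
    · exfalso
      have hRE := (hW.1.2.2.2.1 s hleaf).1
      have : W.rule s ∈ (RE W s).toFinset := Set.mem_toFinset.mpr hRE
      have := Finset.card_pos.mpr ⟨_, this⟩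
      omega
  | succ n ihn =>
    intro s hs
    by_cases hleaf : W.isLeaf s
    · exact subPi_leaf C hW hleaf J
    · obtain ⟨hRE, hsat, hfire⟩ := hW.1.2.2.2.1 s hleaf
      set r₀ := W.rule s with hr₀def
      set I := W.interp s with hIdef
      set Sfin := (RE W s).toFinset with hSfindef
      have hr₀mem : r₀ ∈ Sfin := Set.mem_toFinset.mpr hRE
      set S' := Sfin.erase r₀ with hS'def
      set ch := Finset.univ.filter (fun c => W.isChild c s) with hchdef
      have hchREfin : ∀ c, W.isChild c s → (RE W c).toFinset = S' := by
        intro c hc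
        ext r
        simp only [Set.mem_toFinset, RE_child hc, Set.mem_diff, Set.mem_singleton_iff,
          hS'def, Finset.mem_erase, hSfindef, Set.mem_toFinset]
        tauto
      -- Step 1 : fiber decomposition over children
      have hstep1 : subPi W s J = ∑ c ∈ ch, subPi W c J := by
        rw [subPi]
        set g : W.Node → W.Node := fun l =>
          if h : ∃ c, W.isChild c s ∧ belowN W c l then h.choose else l with hgdef
        set F := Finset.univ.filter
          (fun l => W.isLeaf l ∧ W.interp l = J ∧ belowN W s l) with hFdef
        have hFanc : ∀ l ∈ F, W.strictAnc s l := by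
          intro l hl
          obtain ⟨hlleaf, _, hbel⟩ := (Finset.mem_filter.mp hl).2
          rcases hbel with rfl | hanc
          · exact absurd hlleaf hleaf
          · exact hanc
        have hgmem : ∀ l ∈ F, g l ∈ ch := by
          intro l hl
          have hex : ∃ c, W.isChild c s ∧ belowN W c l :=
            exists_child_toward (hFanc l hl)
          rw [hgdef]
          simp only [dif_pos hex]
          exact Finset.mem_filter.mpr ⟨Finset.mem_univ _, hex.choose_spec.1⟩
        rw [← Finset.sum_fiberwise_of_maps_to hgmem W.pathProb]
        refine Finset.sum_congr rfl fun c hc => ?_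
        have hcchild : W.isChild c s := (Finset.mem_filter.mp hc).2
        rw [subPi]
        congr 1
        ext l
        simp only [Finset.mem_filter, Finset.mem_univ, true_and, hFdef]
        constructor
        · rintro ⟨⟨hlleaf, hlJ, hbel⟩, hgl⟩
          refine ⟨hlleaf, hlJ, ?_⟩
          have hex : ∃ c', W.isChild c' s ∧ belowN W c' l :=
            exists_child_toward (hFanc l (Finset.mem_filter.mpr
              ⟨Finset.mem_univ _, hlleaf, hlJ, hbel⟩))
          rw [hgdef] at hgl
          simp only [dif_pos hex] at hgl
          exact hgl ▸ hex.choose_spec.2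
        · rintro ⟨hlleaf, hlJ, hbc⟩
          have hbel : belowN W s l := by
            rcases hbc with rfl | hanc
            · exact Or.inr (Relation.TransGen.single hcchild)
            · exact Or.inr (Relation.TransGen.tail hanc hcchild)
          have hex : ∃ c', W.isChild c' s ∧ belowN W c' l := ⟨c, hcchild, hbc⟩
          refine ⟨⟨hlleaf, hlJ, hbel⟩, ?_⟩
          rw [hgdef]
          simp only [dif_pos hex]
          exact child_toward_unique hex.choose_spec.1 hcchild hex.choose_spec.2 hbc
      -- Step 2 : induction hypothesis at the children
      have hstep2 : ∀ c ∈ ch, subPi W c J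
          = W.pathProb s * (W.prob c * Gfun C S' (W.interp c) J) := by
        intro c hc
        have hcchild : W.isChild c s := (Finset.mem_filter.mp hc).2
        have hcard : ((RE W c).toFinset).card ≤ n := by
          rw [hchREfin c hcchild, hS'def, Finset.card_erase_of_mem hr₀mem]
          have := Finset.card_pos.mpr ⟨_, hr₀mem⟩
          omega
        have := ihn c hcard
        rw [hchREfin c hcchild] at this
        rw [this, W.pathProb_parent c hcchild.1, hcchild.2]
        ring
      -- Step 3 : match children with head outcomes
      have hstep3 : ∑ c ∈ ch, W.prob c * Gfun C S' (W.interp c) J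
          = Dsum C r₀ S' I J := by
        have hd := (C r₀).head.head (C r₀).head_ne
        set hval : ℕ → A × ℝ :=
          fun i => (C r₀).head.getD i ((C r₀).head.head (C r₀).head_ne) with hvaldef
        rw [← Finset.sum_filter_add_sum_filter_not ch (fun c => (W.choice c).isSome)]
        rw [Dsum]
        congr 1
        · -- some-children
          have hattach : ∑ i ∈ (Finset.range (C r₀).head.length).attach,
              ((C r₀).head.get ⟨i.1, Finset.mem_range.mp i.2⟩).2 *
                Gfun C S' (insert ((C r₀).head.get ⟨i.1, Finset.mem_range.mp i.2⟩).1 I) J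
              = ∑ i ∈ Finset.range (C r₀).head.length,
                  (hval i).2 * Gfun C S' (insert (hval i).1 I) J := by
            rw [← Finset.sum_attach (Finset.range (C r₀).head.length)
              (fun i => (hval i).2 * Gfun C S' (insert (hval i).1 I) J)]
            refine Finset.sum_congr rfl fun x _ => ?_
            have := List.getD_eq_get (C r₀).head ((C r₀).head.head (C r₀).head_ne)
              ⟨x.1, Finset.mem_range.mp x.2⟩
            simp only [hvaldef]
            simp only [this]
          rw [hattach]
          refine Finset.sum_nbij'
            (i := fun c => (W.choice c).getD 0)
            (j := fun i => if h : ∃ c', W.isChild c' s ∧ W.choice c' = some i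
              then h.choose else s) ?_ ?_ ?_ ?_ ?_
          · -- maps to
            intro c hc
            obtain ⟨hcch, hcsome⟩ := Finset.mem_filter.mp hc
            have hcchild : W.isChild c s := (Finset.mem_filter.mp hcch).2
            obtain ⟨i, hi⟩ := Option.isSome_iff_exists.mp hcsome
            obtain ⟨hlt, -, -⟩ := (hfire.1 c hcchild).1 i hi
            beta_reduce
            rw [hi, Option.getD_some]
            exact Finset.mem_range.mpr hlt
          · intro i hi
            have hex := hfire.2.2.1 i (Finset.mem_range.mp hi)
            simp only [dif_pos hex]
            refine Finset.mem_filter.mpr ⟨Finset.mem_filter.mpr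
              ⟨Finset.mem_univ _, hex.choose_spec.1⟩, ?_⟩
            rw [hex.choose_spec.2]
            rfl
          · -- left inverse
            intro c hc
            obtain ⟨hcch, hcsome⟩ := Finset.mem_filter.mp hc
            have hcchild : W.isChild c s := (Finset.mem_filter.mp hcch).2
            obtain ⟨i, hi⟩ := Option.isSome_iff_exists.mp hcsome
            beta_reduce
            rw [hi, Option.getD_some]
            have hex : ∃ c', W.isChild c' s ∧ W.choice c' = some i := ⟨c, hcchild, hi⟩
            simp only [dif_pos hex]
            exact hfire.2.1 _ _ hex.choose_spec.1 hcchild (hex.choose_spec.2.trans hi.symm)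
          · -- right inverse
            intro i hi
            have hex := hfire.2.2.1 i (Finset.mem_range.mp hi)
            simp only [dif_pos hex]
            rw [hex.choose_spec.2, Option.getD_some]
          · -- values
            intro c hc
            obtain ⟨hcch, hcsome⟩ := Finset.mem_filter.mp hc
            have hcchild : W.isChild c s := (Finset.mem_filter.mp hcch).2
            obtain ⟨i, hi⟩ := Option.isSome_iff_exists.mp hcsome
            obtain ⟨hlt, hinterp, hprob⟩ := (hfire.1 c hcchild).1 i hi
            beta_reduce
            rw [hi, Option.getD_some]
            have hgetd : hval i = (C r₀).head.get ⟨i, hlt⟩ :=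
              List.getD_eq_get (C r₀).head _ ⟨i, hlt⟩
            rw [hgetd, hinterp, hprob]
        · -- the `none` child
          by_cases hps : (C r₀).psum < 1
          · obtain ⟨cn, hcnchild, hcnnone⟩ := hfire.2.2.2 hps
            have hchn : ch.filter (fun c => ¬ (W.choice c).isSome) = {cn} := by
              ext c
              simp only [Finset.mem_filter, Finset.mem_univ, true_and,
                Finset.mem_singleton, hchdef]
              constructor
              · rintro ⟨hcchild, hcnone⟩
                have : W.choice c = none := Option.not_isSome_iff_eq_none.mp hcnone
                exact hfire.2.1 _ _ hcchild hcnchild (this.trans hcnnone.symm)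
              · rintro rfl
                exact ⟨hcnchild, by rw [hcnnone]; simp⟩
            rw [hchn, Finset.sum_singleton]
            obtain ⟨-, hinterp, hprob⟩ := (hfire.1 cn hcnchild).2 hcnnone
            rw [hinterp, hprob, ← hIdef]
          · have hchn : ch.filter (fun c => ¬ (W.choice c).isSome) = ∅ := by
              ext c
              simp only [Finset.mem_filter, Finset.mem_univ, true_and,
                Finset.notMem_empty, iff_false, not_and, hchdef]
              intro hcchild hcnone
              have : W.choice c = none := Option.not_isSome_iff_eq_none.mp hcnone
              exact hps ((hfire.1 c hcchild).2 this).1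
            rw [hchn, Finset.sum_empty]
            have hpsum : (C r₀).psum = 1 :=
              le_antisymm (C r₀).head_sum (not_lt.mp hps)
            rw [hpsum]
            ring
      -- Step 4 : exchange identity
      have hexch : Gfun C Sfin I J = Dsum C r₀ S' I J := by
        apply exchange C J Sfin I r₀ hr₀mem
        rw [Set.coe_toFinset]
        exact exec_enabled C hW hleaf
      rw [hstep1, Finset.sum_congr rfl hstep2, ← Finset.mul_sum, hstep3, ← hexch]

end Tree

end Aux

/-- Uniqueness of the semantics of arbitrary CP-theories: any two execution models of a
CP-theory (whose bodies may contain negation) generate the same probability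
distribution over interpretations. -/
theorem uniqueness_general {A R : Type} [Fintype A] [Fintype R]
    (C : R → CPLaw A)
    (W₁ W₂ : Proc A R) (h₁ : IsExec C W₁) (h₂ : IsExec C W₂)
    (J : Set A) :
    piT W₁ J = piT W₂ J := by
  have hpi : ∀ W : Proc A R, IsExec C W → piT W J = Gfun C Finset.univ ∅ J := by
    intro W hW
    have h1 : piT W J = subPi W W.root J := by
      rw [piT, subPi]
      congr 1
      ext l
      simp only [Finset.mem_filter, Finset.mem_univ, true_and]
      constructor
      · rintro ⟨ha, hb⟩
        exact ⟨ha, hb, below_root l⟩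
      · rintro ⟨ha, hb, -⟩
        exact ⟨ha, hb⟩
    have h2 := subPi_eq C hW J W.root
    have h3 : (RE W W.root).toFinset = Finset.univ := by
      ext r
      simp [Set.mem_toFinset, RE_root]
    rw [h1, h2, W.pathProb_root, hW.1.1, h3, one_mul]
  rw [hpi W₁ h₁, hpi W₂ h₂]

end CP
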